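/- Let s, n ∈ ℕ with n ≥ 1, let z ∈ ℤ^s, let α > 1, and let (γ_u)_{u ⊆ {1,…,s}} be positive real weights. Suppose F : ℝ^s → ℂ satisfies F(y) = ∑_{h ∈ ℤ^s} c_h e^{2πi h·y} for all y ∈ [0,1]^s with ∑_{h∈ℤ^s} |c_h| < ∞. Then |I_s(F) − Q_{s,n}(F)| ≤ P_α(γ, z) · sup_{h∈ℤ^s} (|c_h| r_α(γ, h)). -/

import Mathlib

open MeasureTheory Real ENNReal

/-- The unit cube `[0,1]^s`. -/
def unitCube (s : ℕ) : Set (Fin s → ℝ) := Set.univ.pi fun _ => Set.Icc (0 : ℝ) 1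

/-- `I_s(F) = ∫_{[0,1]^s} F(y) dy`. -/
noncomputable def latticeI (s : ℕ) (F : (Fin s → ℝ) → ℂ) : ℂ := ∫ y in unitCube s, F y

/-- The rank-1 lattice rule `Q_{s,n}(F) = (1/n) ∑_{k=0}^{n-1} F({k z / n})`. -/
noncomputable def latticeQ (s n : ℕ) (z : Fin s → ℤ) (F : (Fin s → ℝ) → ℂ) : ℂ :=
  (n : ℂ)⁻¹ * ∑ k ∈ Finset.range n, F fun i => Int.fract ((k : ℝ) * (z i : ℝ) / (n : ℝ))

/-- The support `{j : h_j ≠ 0}` of `h ∈ ℤ^s`. -/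
def intSupp {s : ℕ} (h : Fin s → ℤ) : Finset (Fin s) := Finset.univ.filter fun j => h j ≠ 0

/-- `r_α(γ, h) = γ_{supp(h)}⁻¹ ∏_{j ∈ supp(h)} |h_j|^α`. -/
noncomputable def rAlpha {s : ℕ} (α : ℝ) (γ : Finset (Fin s) → ℝ) (h : Fin s → ℤ) : ℝ :=
  (γ (intSupp h))⁻¹ * ∏ j ∈ intSupp h, (|h j| : ℝ) ^ α

/-- `P_α(γ, z) = ∑_{h ∈ Λ^⊥(z) \ {0}} 1/r_α(γ, h)`, valued in `ℝ≥0∞`. -/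
noncomputable def Palpha (s n : ℕ) (α : ℝ) (γ : Finset (Fin s) → ℝ) (z : Fin s → ℤ) : ℝ≥0∞ :=
  ∑' h : {h : Fin s → ℤ // h ≠ 0 ∧ (n : ℤ) ∣ ∑ i, h i * z i},
    ENNReal.ofReal (1 / rAlpha α γ (h : Fin s → ℤ))


lemma oneD' (m : ℤ) :
    (∫ y in Set.Icc (0:ℝ) 1, Complex.exp ((2*π*Complex.I*m) * (y:ℂ)))
      = if m = 0 then 1 else 0 := by
  rw [MeasureTheory.integral_Icc_eq_integral_Ioc,
    ← intervalIntegral.integral_of_le (zero_le_one)]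
  by_cases hm : m = 0
  · simp [hm]
  · have hc : (2*π*Complex.I*m : ℂ) ≠ 0 := by
      simp [Real.pi_ne_zero, Complex.I_ne_zero, hm]
    rw [integral_exp_mul_complex hc]
    have : Complex.exp (2*π*Complex.I*m * (1:ℝ)) = 1 := by
      push_cast
      rw [mul_one]
      have := Complex.exp_int_mul_two_pi_mul_I m
      rw [← this]; ring_nf
    rw [if_neg hm]
    rw [Complex.ofReal_one, mul_one] at this
    simp [this]

lemma measurable_unitCube (s : ℕ) : MeasurableSet (unitCube s) :=
  MeasurableSet.univ_pi fun _ => measurableSet_Icc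

lemma indicator_pi {s : ℕ} (t : Fin s → Set ℝ) (f : Fin s → ℝ → ℂ) (y : Fin s → ℝ) :
    (Set.univ.pi t).indicator (fun y => ∏ i, f i (y i)) y
      = ∏ i, (t i).indicator (f i) (y i) := by
  by_cases hy : y ∈ Set.univ.pi t
  · rw [Set.indicator_of_mem hy]
    exact Finset.prod_congr rfl fun i _ => (Set.indicator_of_mem (hy i trivial) _).symm
  · rw [Set.indicator_of_notMem hy]
    rw [Set.mem_pi] at hy
    push_neg at hy
    obtain ⟨i, _, hi⟩ := hy
    exact (Finset.prod_eq_zero (Finset.mem_univ i)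
      (by rw [Set.indicator_of_notMem hi])).symm

lemma cubeIntegral' {s : ℕ} (h : Fin s → ℤ) :
    (∫ y in unitCube s, Complex.exp (2*π*Complex.I * ∑ i, (h i : ℂ) * (y i : ℂ)))
      = if h = 0 then 1 else 0 := by
  have heq : ∀ y : Fin s → ℝ,
      Complex.exp (2*π*Complex.I * ∑ i, (h i : ℂ) * (y i : ℂ))
        = ∏ i, Complex.exp ((2*π*Complex.I*(h i)) * (y i : ℂ)) := by
    intro y
    rw [Finset.mul_sum, Complex.exp_sum]
    exact Finset.prod_congr rfl fun i _ => by ring_nf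
  simp_rw [heq]
  rw [← MeasureTheory.integral_indicator (measurable_unitCube s)]
  unfold unitCube
  simp_rw [indicator_pi (fun _ => Set.Icc (0:ℝ) 1)
    (fun i t => Complex.exp ((2*π*Complex.I*(h i)) * (t:ℂ)))]
  rw [MeasureTheory.volume_pi, MeasureTheory.integral_fintype_prod_eq_prod
    (fun i t => (Set.Icc (0:ℝ) 1).indicator
      (fun u => Complex.exp ((2*π*Complex.I*(h i)) * (u:ℂ))) t)]
  have : ∀ i, (∫ t : ℝ, (Set.Icc (0:ℝ) 1).indicator
      (fun u => Complex.exp ((2*π*Complex.I*(h i)) * (u:ℂ))) t)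
      = if h i = 0 then 1 else 0 := by
    intro i
    rw [MeasureTheory.integral_indicator measurableSet_Icc]
    exact oneD' (h i)
  simp_rw [this]
  by_cases hh : h = 0
  · simp [hh]
  · rw [if_neg hh]
    obtain ⟨i, hi⟩ : ∃ i, h i ≠ 0 := by
      by_contra hc; push_neg at hc; exact hh (funext hc)
    exact Finset.prod_eq_zero (Finset.mem_univ i) (by rw [if_neg hi])

lemma expOne' (t : ℤ) : Complex.exp (2*π*Complex.I * t) = 1 := by
  have := Complex.exp_int_mul_two_pi_mul_I t
  rw [← this]; ring_nf

lemma charSum' (n : ℕ) (hn : 1 ≤ n) (m : ℤ) :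
    (∑ k ∈ Finset.range n, Complex.exp (2*π*Complex.I * (k * m / n)))
      = if (n:ℤ) ∣ m then (n:ℂ) else 0 := by
  have hn0 : (n:ℂ) ≠ 0 := Nat.cast_ne_zero.mpr (by omega)
  set w : ℂ := Complex.exp (2*π*Complex.I * (m / n)) with hw
  have hterm : ∀ k : ℕ, Complex.exp (2*π*Complex.I * (k * m / n)) = w ^ k := by
    intro k
    rw [hw, ← Complex.exp_nat_mul]
    ring_nf
  simp_rw [hterm]
  by_cases hd : (n:ℤ) ∣ m
  · obtain ⟨t, ht⟩ := hd
    have hw1 : w = 1 := by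
      rw [hw, ht]
      push_cast
      rw [mul_comm (n:ℂ) (t:ℂ), mul_div_assoc, div_self hn0, mul_one]
      exact expOne' t
    rw [if_pos ⟨t, ht⟩]
    simp [hw1]
  · have hwn : w ^ n = 1 := by
      rw [hw, ← Complex.exp_nat_mul]
      have : (n:ℂ) * (2*π*Complex.I * (m / n)) = 2*π*Complex.I * m := by
        field_simp
      rw [this]
      exact expOne' m
    have hw1 : w ≠ 1 := by
      intro hcon
      rw [hw, Complex.exp_eq_one_iff] at hcon
      obtain ⟨k, hk⟩ := hcon
      apply hd
      have hπ : (2*π*Complex.I : ℂ) ≠ 0 := by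
        simp [Real.pi_ne_zero, Complex.I_ne_zero]
      have h2 : (2*π*Complex.I) * ((m:ℂ)/n) = (2*π*Complex.I) * k := by
        rw [hk]; ring
      have h3 : (m:ℂ)/n = k := mul_left_cancel₀ hπ h2
      have hmc : (m:ℂ) = n * k := by
        field_simp at h3
        linear_combination h3
      exact ⟨k, by exact_mod_cast hmc⟩
    rw [if_neg hd]
    have := geom_sum_eq hw1 n
    rw [this, hwn]
    simp

lemma expFract (n : ℕ) {s : ℕ} (z h : Fin s → ℤ) (k : ℕ) :
    Complex.exp (2*π*Complex.I * ∑ i, (h i : ℂ) *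
        ((Int.fract ((k:ℝ) * (z i :ℝ) / (n:ℝ)) : ℝ) : ℂ))
      = Complex.exp (2*π*Complex.I * ((k:ℂ) * ((∑ i, h i * z i : ℤ):ℂ) / (n:ℂ))) := by
  have step : ∀ i : Fin s, (h i : ℂ) * ((Int.fract ((k:ℝ) * (z i:ℝ) / (n:ℝ)) : ℝ) : ℂ)
      = ((k:ℂ) * ((h i * z i : ℤ):ℂ)) / (n:ℂ)
        - ((h i * ⌊(k:ℝ) * (z i:ℝ) / (n:ℝ)⌋ : ℤ) : ℂ) := by
    intro i
    simp only [Int.fract]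
    push_cast
    ring
  have key : (2*π*Complex.I : ℂ) * ∑ i, (h i : ℂ) *
        ((Int.fract ((k:ℝ) * (z i:ℝ) / (n:ℝ)) : ℝ) : ℂ)
      = 2*π*Complex.I * ((k:ℂ) * ((∑ i, h i * z i : ℤ):ℂ) / (n:ℂ))
        + 2*π*Complex.I * (((- ∑ i, h i * ⌊(k:ℝ) * (z i:ℝ) / (n:ℝ)⌋ : ℤ)):ℂ) := by
    simp_rw [step, Finset.sum_sub_distrib, ← Finset.sum_div, ← Finset.mul_sum]
    push_cast
    ring
  rw [key, Complex.exp_add, expOne' _, mul_one]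

lemma rAlpha_pos {s : ℕ} (α : ℝ) (γ : Finset (Fin s) → ℝ) (hγ : ∀ u, 0 < γ u)
    (h : Fin s → ℤ) : 0 < rAlpha α γ h := by
  apply mul_pos (inv_pos.mpr (hγ _))
  apply Finset.prod_pos
  intro j hj
  have : h j ≠ 0 := (Finset.mem_filter.mp hj).2
  exact Real.rpow_pos_of_pos (by exact_mod_cast abs_pos.mpr this) α

theorem stmt_8 (s n : ℕ) (hn : 1 ≤ n) (z : Fin s → ℤ) (α : ℝ) (hα : 1 < α)
    (γ : Finset (Fin s) → ℝ) (hγ : ∀ u, 0 < γ u)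
    (F : (Fin s → ℝ) → ℂ) (c : (Fin s → ℤ) → ℂ)
    (hsum : Summable fun h => ‖c h‖)
    (hF : ∀ y : Fin s → ℝ, y ∈ unitCube s →
      F y = ∑' h : Fin s → ℤ,
        c h * Complex.exp (2 * π * Complex.I * ∑ i, (h i : ℂ) * (y i : ℂ))) :
    ENNReal.ofReal (‖latticeI s F - latticeQ s n z F‖)
      ≤ Palpha s n α γ z *
          ⨆ h : Fin s → ℤ, ENNReal.ofReal (‖c h‖ * rAlpha α γ h) := by
  classical
  have hn0C : (n : ℂ) ≠ 0 := Nat.cast_ne_zero.mpr (by omega)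
  set E : (Fin s → ℤ) → (Fin s → ℝ) → ℂ :=
    fun h y => Complex.exp (2 * π * Complex.I * ∑ i, (h i : ℂ) * (y i : ℂ)) with hE
  have hnorm : ∀ (h : Fin s → ℤ) (y : Fin s → ℝ), ‖c h * E h y‖ = ‖c h‖ := by
    intro h y
    have harg : (2 * π * Complex.I * ∑ i, (h i : ℂ) * (y i : ℂ))
        = ((2 * π * ∑ i, (h i : ℝ) * y i : ℝ) : ℂ) * Complex.I := by
      push_cast
      ring
    simp only [hE]
    rw [norm_mul, harg,
      Complex.norm_exp_ofReal_mul_I, mul_one]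
  have hnnnorm : ∀ (h : Fin s → ℤ) (y : Fin s → ℝ), ‖c h * E h y‖₊ = ‖c h‖₊ :=
    fun h y => NNReal.coe_injective
      (by rw [coe_nnnorm, coe_nnnorm, hnorm h y])
  have hsummN : ∀ y : Fin s → ℝ, Summable fun h => ‖c h * E h y‖ :=
    fun y => (summable_congr fun h => (hnorm h y)).mpr hsum
  have hsummable : ∀ y : Fin s → ℝ, Summable fun h => c h * E h y :=
    fun y => Summable.of_norm (hsummN y)
  have hvol : (volume (unitCube s)) = 1 := by
    rw [unitCube, volume_pi_pi]
    simp [Real.volume_Icc]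
  -- Step 1: latticeI s F = c 0
  have hI : latticeI s F = c 0 := by
    have h1 : latticeI s F = ∫ y in unitCube s, ∑' h, c h * E h y :=
      setIntegral_congr_fun (measurable_unitCube s) (fun y hy => by rw [hF y hy])
    have hmeas : ∀ h : Fin s → ℤ,
        AEStronglyMeasurable (fun y => c h * E h y) (volume.restrict (unitCube s)) := by
      intro h
      apply Continuous.aestronglyMeasurable
      simp only [hE]
      fun_prop
    have hfin : (∑' h : Fin s → ℤ, ∫⁻ y in unitCube s, ‖c h * E h y‖₊ ∂volume) ≠ ⊤ := by
      have heach : ∀ h : Fin s → ℤ,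
          (∫⁻ y in unitCube s, ‖c h * E h y‖₊ ∂volume) = (‖c h‖₊ : ℝ≥0∞) := by
        intro h
        simp_rw [hnnnorm h]
        rw [MeasureTheory.lintegral_const, Measure.restrict_apply_univ, hvol, mul_one]
      simp_rw [heach]
      apply ENNReal.tsum_coe_ne_top_iff_summable.mpr
      exact NNReal.summable_coe.mp
        ((summable_congr fun h => by rw [coe_nnnorm]).mpr hsum)
    rw [h1, integral_tsum hmeas hfin]
    have hterm : ∀ h : Fin s → ℤ, (∫ y in unitCube s, c h * E h y)
        = if h = 0 then c 0 else 0 := by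
      intro h
      rw [MeasureTheory.integral_const_mul]
      simp only [hE]
      rw [cubeIntegral' h]
      split
      · next hh => simp [hh]
      · simp
    simp_rw [hterm]
    exact tsum_ite_eq (0 : Fin s → ℤ) (fun _ => c 0)
  -- Step 2: latticeQ = tsum of g
  set m : (Fin s → ℤ) → ℤ := fun h => ∑ i, h i * z i with hm
  set g : (Fin s → ℤ) → ℂ := fun h => if (n:ℤ) ∣ m h then c h else 0 with hg
  have hQ : latticeQ s n z F = ∑' h, g h := by
    have hyk : ∀ k : ℕ, (fun i => Int.fract ((k:ℝ) * (z i : ℝ) / (n:ℝ))) ∈ unitCube s := by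
      intro k i _
      exact ⟨Int.fract_nonneg _, le_of_lt (Int.fract_lt_one _)⟩
    rw [latticeQ]
    have h2 : ∀ k ∈ Finset.range n,
        F (fun i => Int.fract ((k:ℝ) * (z i : ℝ) / (n:ℝ)))
        = ∑' h, c h * E h (fun i => Int.fract ((k:ℝ) * (z i : ℝ) / (n:ℝ))) := by
      intro k _
      rw [hF _ (hyk k)]
    rw [Finset.sum_congr rfl h2,
      ← Summable.tsum_finsetSum (s := Finset.range n)
        (f := fun (k : ℕ) (h : Fin s → ℤ) =>
          c h * E h fun i => Int.fract ((k:ℝ) * (z i : ℝ) / (n:ℝ)))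
        (fun k _ => hsummable _),
      ← tsum_mul_left]
    congr 1
    funext h
    have hEk : ∀ k : ℕ, E h (fun i => Int.fract ((k:ℝ) * (z i : ℝ) / (n:ℝ)))
        = Complex.exp (2*π*Complex.I * ((k:ℂ) * ((m h : ℤ):ℂ) / (n:ℂ))) := by
      intro k
      simp only [hE]
      exact expFract n z h k
    simp_rw [hEk, ← Finset.mul_sum, charSum' n hn (m h)]
    simp only [hg]
    split
    · field_simp
    · simp
  -- Step 3: error representation
  have hg0 : g 0 = c 0 := by
    simp only [hg, hm]
    rw [if_pos]
    simp
  have hgsumm : Summable g := by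
    apply Summable.of_norm_bounded hsum
    intro h
    simp only [hg]
    split
    · exact le_rfl
    · simp
  set g' : (Fin s → ℤ) → ℂ := fun h => if h = 0 then 0 else g h with hg'
  have hg'summN : Summable fun h => ‖g' h‖ := by
    apply Summable.of_nonneg_of_le (fun h => norm_nonneg _) _ hsum
    intro h
    simp only [hg', hg]
    split
    · simp
    · split
      · exact le_rfl
      · simp
  have hdiff : latticeI s F - latticeQ s n z F = -∑' h, g' h := by
    rw [hI, hQ, hgsumm.tsum_eq_add_tsum_ite 0, hg0]
    simp only [hg']
    ring
  -- Step 4: the bound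
  set C : ℝ≥0∞ := ⨆ h : Fin s → ℤ, ENNReal.ofReal (‖c h‖ * rAlpha α γ h) with hC
  have habs : ‖latticeI s F - latticeQ s n z F‖ ≤ ∑' h, ‖g' h‖ := by
    rw [hdiff, norm_neg]
    exact norm_tsum_le_tsum_norm hg'summN
  calc ENNReal.ofReal (‖latticeI s F - latticeQ s n z F‖)
      ≤ ENNReal.ofReal (∑' h, ‖g' h‖) := ENNReal.ofReal_le_ofReal habs
    _ = ∑' h, ENNReal.ofReal ‖g' h‖ :=
        ENNReal.ofReal_tsum_of_nonneg (fun h => norm_nonneg _) hg'summN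
    _ = ∑' h : {h : Fin s → ℤ // h ≠ 0 ∧ (n : ℤ) ∣ ∑ i, h i * z i},
          ENNReal.ofReal ‖g' (h : Fin s → ℤ)‖ := by
        refine (tsum_subtype_eq_of_support_subset ?_).symm
        intro h hh
        simp only [Function.mem_support, ne_eq] at hh
        constructor
        · intro h0
          apply hh
          simp [hg', h0]
        · by_contra hdvd
          apply hh
          have : g h = 0 := by simp [hg, hm, hdvd]
          simp [hg', this]
    _ ≤ ∑' h : {h : Fin s → ℤ // h ≠ 0 ∧ (n : ℤ) ∣ ∑ i, h i * z i},
          ENNReal.ofReal (1 / rAlpha α γ (h : Fin s → ℤ)) * C := by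
        apply ENNReal.tsum_le_tsum
        rintro ⟨h, hh0, hhd⟩
        have hr := rAlpha_pos α γ hγ h
        have hgv : g' h = c h := by
          simp only [hg', hg, hm]
          rw [if_neg hh0, if_pos hhd]
        rw [hgv]
        have : ‖c h‖ = (1 / rAlpha α γ h) * (‖c h‖ * rAlpha α γ h) := by
          field_simp
        rw [this, ENNReal.ofReal_mul (by positivity)]
        exact mul_le_mul_right (le_iSup (fun h => ENNReal.ofReal
          (‖c h‖ * rAlpha α γ h)) h) _
    _ = Palpha s n α γ z * C := by
        rw [Palpha, ENNReal.tsum_mul_right]
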